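/- Let Δ be a connected finite flag complex. The kernel H_Δ of the map G_Δ → ℤ sending all generators to 1 admits a presentation with generators the directed edges of Δ and relators all words e₁ⁿe₂ⁿ⋯e_lⁿ where (e₁,…,e_l) is a directed cycle in Δ, n ∈ ℤ, n ≠ 0, and l ≥ 2; the isomorphism sends the generator e to ιe·(τe)⁻¹ ∈ G_Δ. -/

import Mathlib

/-- The commutator relators of the right-angled Artin group of a graph. -/
def raagRels {V : Type*} (G : SimpleGraph V) : Set (FreeGroup V) :=
  {w | ∃ v v', G.Adj v v' ∧
    w = FreeGroup.of v * FreeGroup.of v' * (FreeGroup.of v)⁻¹ * (FreeGroup.of v')⁻¹}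

/-- The right-angled Artin group of (the flag complex determined by) a graph. -/
abbrev Raag {V : Type*} (G : SimpleGraph V) := PresentedGroup (raagRels G)

/-- A directed cycle of length `l ≥ 2`: a list of darts, cyclically consecutive darts
matching head to tail. -/
def IsDirectedCycle {V : Type*} (G : SimpleGraph V) (c : List G.Dart) : Prop :=
  2 ≤ c.length ∧ ∀ i : Fin c.length,
    (c.get i).toProd.2 = (c.get ⟨(i + 1) % c.length, Nat.mod_lt _ i.pos⟩).toProd.1

/-- The word `e₁ⁿ ⋯ e_lⁿ` in the free group on the darts. -/
def cycleWord {V : Type*} {G : SimpleGraph V} (c : List G.Dart) (n : ℤ) : FreeGroup G.Dart :=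
  (c.map (fun e => FreeGroup.of e ^ n)).prod

/-- The relators `e₁ⁿ⋯e_lⁿ` over directed cycles of length `≥ 2` and nonzero `n`. -/
def cycleRels {V : Type*} (G : SimpleGraph V) : Set (FreeGroup G.Dart) :=
  {w | ∃ (c : List G.Dart) (n : ℤ), IsDirectedCycle G c ∧ n ≠ 0 ∧ w = cycleWord c n}

namespace KernelPresAux

open SimpleGraph

variable {V : Type*} {G : SimpleGraph V}

/-- telescoping along a walk -/
lemma walk_prod {M : Type*} [Group M] (h : V → M) (m : G.Dart → M)
    (f : G.Dart → M) (hf : ∀ d, f d = (h d.toProd.1)⁻¹ * m d * h d.toProd.2)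
    {u v : V} (w : G.Walk u v) :
    (w.darts.map f).prod = (h u)⁻¹ * (w.darts.map m).prod * h v := by
  induction w with
  | nil => simp
  | cons hadj p ih => simp [hf, ih, mul_assoc]

/-- telescoping along a chain of darts -/
lemma chain_prod {M : Type*} [Group M] (h : V → M) (m : G.Dart → M)
    (f : G.Dart → M) (hf : ∀ d, f d = (h d.toProd.1)⁻¹ * m d * h d.toProd.2) :
    ∀ (c : List G.Dart) (hne : c ≠ []), c.Chain' G.DartAdj →
      (c.map f).prod
        = (h (c.head hne).toProd.1)⁻¹ * (c.map m).prod * h ((c.getLast hne).toProd.2)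
  | [], hne, _ => absurd rfl hne
  | [d], _, _ => by simp [hf]
  | d :: d' :: t, _, hc => by
      obtain ⟨hdd, hc'⟩ := List.isChain_cons_cons.mp hc
      have ih := chain_prod h m f hf (d' :: t) (by simp) hc'
      have hd : d.toProd.2 = d'.toProd.1 := hdd
      simp only [List.map_cons, List.prod_cons] at ih ⊢
      rw [hf d, ih, List.getLast_cons (by simp : (d' :: t) ≠ []), hd]
      simp [mul_assoc]

lemma isDirectedCycle_of_chain (c : List G.Dart) (h2 : 2 ≤ c.length)
    (hc : c.Chain' G.DartAdj) (hne : c ≠ [])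
    (hlast : (c.getLast hne).toProd.2 = (c.head hne).toProd.1) :
    IsDirectedCycle G c := by
  refine ⟨h2, fun i => ?_⟩
  rcases Nat.lt_or_ge (i + 1) c.length with hlt | hge
  · have := List.isChain_iff_getElem.mp hc i (by omega)
    simp only [Nat.mod_eq_of_lt hlt]
    exact this
  · have hi : (i : ℕ) = c.length - 1 := by omega
    have hmod : ((i : ℕ) + 1) % c.length = 0 := by
      rw [hi, Nat.sub_add_cancel (by omega), Nat.mod_self]
    simp only [hmod]
    have h1 : c.get i = c.getLast hne := by
      rw [List.getLast_eq_getElem]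
      simp [hi, List.get_eq_getElem]
    have h0 : c.get ⟨0, by omega⟩ = c.head hne := by
      rw [List.head_eq_getElem_zero]
      simp [List.get_eq_getElem]
    simp only [h1]
    rw [hlast, ← h0]

lemma chain_of_isDirectedCycle (c : List G.Dart) (hc : IsDirectedCycle G c) :
    c.Chain' G.DartAdj := by
  refine List.isChain_iff_getElem.mpr fun i hi => ?_
  have := hc.2 ⟨i, by omega⟩
  simpa [SimpleGraph.DartAdj, Nat.mod_eq_of_lt (show i + 1 < c.length by omega)] using this

lemma ne_nil_of_isDirectedCycle (c : List G.Dart) (hc : IsDirectedCycle G c) : c ≠ [] := by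
  intro h; rw [h] at hc; simpa using hc.1

lemma wrap_of_isDirectedCycle (c : List G.Dart) (hc : IsDirectedCycle G c)
    (hne : c ≠ []) :
    (c.getLast hne).toProd.2 = (c.head hne).toProd.1 := by
  have hlen : 0 < c.length := List.length_pos_iff.mpr hne
  have := hc.2 ⟨c.length - 1, by omega⟩
  have hmod : (c.length - 1 + 1) % c.length = 0 := by
    rw [Nat.sub_add_cancel (by omega), Nat.mod_self]
  simp only [hmod] at this
  rw [List.getLast_eq_getElem, List.head_eq_getElem_zero]
  simpa [List.get_eq_getElem] using this


variable (G) in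
/-- The quotient map onto the presented group. -/
noncomputable abbrev mkh : FreeGroup G.Dart →* PresentedGroup (cycleRels G) :=
  QuotientGroup.mk' (Subgroup.normalClosure (cycleRels G))

lemma mkh_of (e : G.Dart) : mkh G (FreeGroup.of e) = PresentedGroup.of e := rfl

lemma mkh_cycleWord (c : List G.Dart) (n : ℤ) :
    mkh G (cycleWord c n)
      = (c.map fun e => (PresentedGroup.of e : PresentedGroup (cycleRels G)) ^ n).prod := by
  rw [cycleWord, map_list_prod, List.map_map]
  congr 1

/-- The cycle relators hold in the presented group, for every `n`. -/
lemma cyc_rel {c : List G.Dart} (hc : IsDirectedCycle G c) (n : ℤ) :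
    (c.map fun e => (PresentedGroup.of e : PresentedGroup (cycleRels G)) ^ n).prod = 1 := by
  rcases eq_or_ne n 0 with rfl | hn
  · simp
  · rw [← mkh_cycleWord]
    exact (QuotientGroup.eq_one_iff _).mpr
      (Subgroup.subset_normalClosure ⟨c, n, hc, hn, rfl⟩)

/-- head dart of a walk starts at the start. -/
lemma head_darts_fst {u v : V} (w : G.Walk u v) (hne : w.darts ≠ []) :
    (w.darts.head hne).toProd.1 = u := by
  cases w with
  | nil => simp at hne
  | cons h p => rfl

lemma getLast_darts_snd {u v : V} (w : G.Walk u v) (hne : w.darts ≠ []) :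
    (w.darts.getLast hne).toProd.2 = v := by
  induction w with
  | nil => simp at hne
  | @cons a b c h p ih =>
    cases p with
    | nil => rfl
    | cons h' q =>
      simp only [Walk.darts_cons]
      rw [List.getLast_cons (by simp)]
      exact ih _

/-- Closed-walk relators hold in the presented group. -/
lemma closed_walk_rel {u : V} (w : G.Walk u u) (n : ℤ) :
    (w.darts.map fun e => (PresentedGroup.of e : PresentedGroup (cycleRels G)) ^ n).prod = 1 := by
  cases w with
  | nil => simp
  | cons h p =>
    cases p with
    | nil => exact absurd h (G.irrefl)
    | cons h' q =>
      apply cyc_rel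
      apply isDirectedCycle_of_chain _ _ (Walk.isChain_dartAdj_darts _) (by simp)
      · exact (getLast_darts_snd _ _).trans (head_darts_fst _ _).symm
      · rw [Walk.length_darts]
        simp [Walk.length_cons]


lemma of_symm (d : G.Dart) :
    (PresentedGroup.of d.symm : PresentedGroup (cycleRels G)) = (PresentedGroup.of d)⁻¹ := by
  have hcyc : IsDirectedCycle G [d, d.symm] := by
    refine ⟨by simp, fun i => ?_⟩
    fin_cases i <;> simp
  have h := cyc_rel hcyc 1
  simp only [List.map_cons, List.map_nil, List.prod_cons, List.prod_nil, zpow_one, mul_one] at h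
  exact eq_inv_of_mul_eq_one_right h

lemma rev_prod {M : Type*} [Group M] (f : G.Dart → M) (hf : ∀ d, f d.symm = (f d)⁻¹) :
    ∀ l : List G.Dart, ((l.map Dart.symm).reverse.map f).prod = ((l.map f).prod)⁻¹
  | [] => by simp
  | d :: t => by
      rw [List.map_cons, List.reverse_cons, List.map_append, List.prod_append,
        rev_prod f hf t]
      simp [hf, mul_inv_rev]

lemma lift_cycleWord {M : Type*} [Group M] (f : G.Dart → M) (c : List G.Dart) (n : ℤ) :
    FreeGroup.lift f (cycleWord c n) = (c.map fun e => f e ^ n).prod := by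
  rw [cycleWord, map_list_prod, List.map_map]
  simp [Function.comp_def]

section Base

variable {v₀ : V} (W : ∀ v : V, G.Walk v v₀)

/-- `Y W v k` is the image in the presented group of the word `∏ e^k` along the chosen
walk from `v` to the base vertex. -/
noncomputable def Y (v : V) (k : ℤ) : PresentedGroup (cycleRels G) :=
  ((W v).darts.map fun d => (PresentedGroup.of d : PresentedGroup (cycleRels G)) ^ k).prod

lemma Y_base (k : ℤ) : Y W v₀ k = 1 := closed_walk_rel (W v₀) k

lemma Y_zero (v : V) : Y W v 0 = 1 := by
  simp [Y]

lemma Y_eq (d : G.Dart) (k : ℤ) :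
    Y W d.toProd.1 k = (PresentedGroup.of d : PresentedGroup (cycleRels G)) ^ k
      * Y W d.toProd.2 k := by
  have hw := closed_walk_rel
    (Walk.cons d.adj ((W d.toProd.2).append (W d.toProd.1).reverse)) k
  simp only [Walk.darts_cons, Walk.darts_append, Walk.darts_reverse, List.map_cons,
    List.prod_cons, List.map_append, List.prod_append] at hw
  have hd : (⟨(d.toProd.1, d.toProd.2), d.adj⟩ : G.Dart) = d := rfl
  rw [hd] at hw
  rw [rev_prod (fun e => (PresentedGroup.of e : PresentedGroup (cycleRels G)) ^ k)
    (fun e => by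
      show (PresentedGroup.of e.symm : PresentedGroup (cycleRels G)) ^ k
        = ((PresentedGroup.of e : PresentedGroup (cycleRels G)) ^ k)⁻¹
      rw [of_symm, inv_zpow]) ((W d.toProd.1).darts)] at hw
  have h2 : (PresentedGroup.of d : PresentedGroup (cycleRels G)) ^ k * Y W d.toProd.2 k
      * (Y W d.toProd.1 k)⁻¹ = 1 := by
    rw [Y, Y, mul_assoc]; exact hw
  rw [mul_inv_eq_one] at h2
  exact h2.symm

/-- The conjugating function defining the shift endomorphism. -/
noncomputable def sigf (k : ℤ) : G.Dart → PresentedGroup (cycleRels G) :=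
  fun e => (Y W e.toProd.1 k)⁻¹ * PresentedGroup.of e * Y W e.toProd.1 k

lemma sigf_pow (k n : ℤ) (d : G.Dart) :
    (sigf W k d) ^ n
      = (Y W d.toProd.1 k)⁻¹
        * (PresentedGroup.of d : PresentedGroup (cycleRels G)) ^ (n + k)
        * Y W d.toProd.2 k := by
  rw [sigf]
  have h := conj_zpow (i := n) (a := (Y W d.toProd.1 k)⁻¹) (b := PresentedGroup.of d)
  rw [inv_inv] at h
  rw [h, Y_eq W d k]
  group

/-- The shift endomorphism of the presented group. -/
noncomputable def sig (k : ℤ) :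
    PresentedGroup (cycleRels G) →* PresentedGroup (cycleRels G) :=
  PresentedGroup.toGroup (f := sigf W k) (by
    rintro r ⟨c, n, hc, hn, rfl⟩
    rw [lift_cycleWord]
    have hne := ne_nil_of_isDirectedCycle c hc
    rw [chain_prod (fun v => Y W v k) (fun e => PresentedGroup.of e ^ (n + k))
      (fun e => (sigf W k e) ^ n) (sigf_pow W k n) c hne (chain_of_isDirectedCycle c hc)]
    rw [cyc_rel hc (n + k), wrap_of_isDirectedCycle c hc hne]
    simp)

lemma sig_of (k : ℤ) (e : G.Dart) :
    sig W k (PresentedGroup.of e)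
      = (Y W e.toProd.1 k)⁻¹ * PresentedGroup.of e * Y W e.toProd.1 k :=
  PresentedGroup.toGroup.of _

lemma sig_Y (k j : ℤ) (v : V) :
    sig W k (Y W v j) = (Y W v k)⁻¹ * Y W v (j + k) := by
  rw [Y, map_list_prod, List.map_map]
  have hf : ∀ d : G.Dart,
      (sig W k ∘ fun d => (PresentedGroup.of d : PresentedGroup (cycleRels G)) ^ j) d
        = ((fun u => Y W u k) d.toProd.1)⁻¹
          * (fun e => (PresentedGroup.of e : PresentedGroup (cycleRels G)) ^ (j + k)) d
          * (fun u => Y W u k) d.toProd.2 := by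
    intro d
    simp only [Function.comp_apply, map_zpow, sig_of]
    exact sigf_pow W k j d
  rw [walk_prod (fun u => Y W u k) (fun e => PresentedGroup.of e ^ (j + k)) _ hf (W v)]
  rw [Y_base]
  rw [mul_one]
  rfl

lemma sig_comp (k j : ℤ) :
    (sig W k).comp (sig W j) = sig W (j + k) := by
  ext e
  simp only [MonoidHom.comp_apply, sig_of]
  rw [map_mul, map_mul, map_inv, sig_Y, sig_of]
  group

lemma sig_zero : sig W 0 = MonoidHom.id _ := by
  ext e
  simp [sig_of, Y_zero]

/-- The shift automorphism. -/
noncomputable def sigAut (k : ℤ) :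
    PresentedGroup (cycleRels G) ≃* PresentedGroup (cycleRels G) :=
  MonoidHom.toMulEquiv (sig W k) (sig W (-k))
    (by rw [sig_comp]; simp only [add_neg_cancel]; exact sig_zero W)
    (by rw [sig_comp]; simp only [neg_add_cancel]; exact sig_zero W)

lemma sigAut_apply (k : ℤ) (x : PresentedGroup (cycleRels G)) :
    sigAut W k x = sig W k x := rfl

/-- The action of `ℤ` on the presented group by shift automorphisms. -/
noncomputable def theta : Multiplicative ℤ →* MulAut (PresentedGroup (cycleRels G)) where
  toFun k := sigAut W k.toAdd
  map_one' := by
    refine MulEquiv.ext fun x => ?_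
    show sig W 0 x = x
    rw [sig_zero]; rfl
  map_mul' k j := by
    refine MulEquiv.ext fun x => ?_
    show sig W ((k * j).toAdd) x = sig W k.toAdd (sig W j.toAdd x)
    have : (k * j).toAdd = j.toAdd + k.toAdd := by
      rw [toAdd_mul, add_comm]
    rw [this, ← sig_comp]
    rfl

lemma theta_apply (k : Multiplicative ℤ) (x : PresentedGroup (cycleRels G)) :
    theta W k x = sig W k.toAdd x := rfl

end Base

lemma raag_comm {a b : V} (h : G.Adj a b) :
    Commute (PresentedGroup.of a : Raag G) (PresentedGroup.of b) := by
  have hmem : (FreeGroup.of a * FreeGroup.of b * (FreeGroup.of a)⁻¹ * (FreeGroup.of b)⁻¹ :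
      FreeGroup V) ∈ Subgroup.normalClosure (raagRels G) :=
    Subgroup.subset_normalClosure ⟨a, b, h, rfl⟩
  have h1 : (QuotientGroup.mk' (Subgroup.normalClosure (raagRels G)))
      (FreeGroup.of a * FreeGroup.of b * (FreeGroup.of a)⁻¹ * (FreeGroup.of b)⁻¹) = 1 :=
    (QuotientGroup.eq_one_iff _).mpr hmem
  simp only [map_mul, map_inv] at h1
  rw [mul_inv_eq_one, mul_inv_eq_iff_eq_mul] at h1
  exact h1

/-- Generator images in the right-angled Artin group. -/
noncomputable def alphaf : G.Dart → Raag G := fun e =>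
  PresentedGroup.of e.toProd.1 * (PresentedGroup.of e.toProd.2)⁻¹

lemma alphaf_zpow (e : G.Dart) (n : ℤ) :
    (alphaf e) ^ n = (PresentedGroup.of e.toProd.1 : Raag G) ^ n
      * ((PresentedGroup.of e.toProd.2 : Raag G) ^ n)⁻¹ := by
  have hc : Commute (PresentedGroup.of e.toProd.1 : Raag G)
      (PresentedGroup.of e.toProd.2)⁻¹ := (raag_comm e.adj).inv_right
  rw [alphaf, hc.mul_zpow, inv_zpow]

/-- The homomorphism from the cycle-presented group to the RAAG. -/
noncomputable def alpha : PresentedGroup (cycleRels G) →* Raag G :=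
  PresentedGroup.toGroup (f := alphaf) (by
    rintro r ⟨c, n, hc, hn, rfl⟩
    rw [lift_cycleWord]
    have hne := ne_nil_of_isDirectedCycle c hc
    rw [chain_prod (fun u => (PresentedGroup.of u : Raag G) ^ (-n)) (fun _ => (1 : Raag G))
      (fun e => alphaf e ^ n)
      (fun d => by show alphaf d ^ n = _; rw [alphaf_zpow]; simp [zpow_neg]) c hne (chain_of_isDirectedCycle c hc)]
    rw [wrap_of_isDirectedCycle c hc hne]
    simp)

lemma alpha_of (e : G.Dart) : alpha (PresentedGroup.of e) = alphaf e :=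
  PresentedGroup.toGroup.of _

section Base2

variable {v₀ : V} (W : ∀ v : V, G.Walk v v₀)

lemma alpha_Y (v : V) (k : ℤ) :
    alpha (Y W v k) = (PresentedGroup.of v : Raag G) ^ k
      * ((PresentedGroup.of v₀ : Raag G) ^ k)⁻¹ := by
  rw [Y, map_list_prod, List.map_map]
  rw [walk_prod (fun u => (PresentedGroup.of u : Raag G) ^ (-k)) (fun _ => (1 : Raag G))
    _ (fun d => by
      show alpha (PresentedGroup.of d ^ k) = _
      rw [map_zpow, alpha_of, alphaf_zpow]
      simp [zpow_neg]) (W v)]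
  simp [zpow_neg]

/-- The homomorphism from the RAAG to the semidirect product. -/
noncomputable def Bhom : Raag G →*
    SemidirectProduct (PresentedGroup (cycleRels G)) (Multiplicative ℤ) (theta W) :=
  PresentedGroup.toGroup
    (f := fun v => (⟨Y W v 1, Multiplicative.ofAdd 1⟩ :
      SemidirectProduct (PresentedGroup (cycleRels G)) (Multiplicative ℤ) (theta W)))
    (by
      rintro r ⟨a, b, hab, rfl⟩
      simp only [map_mul, map_inv, FreeGroup.lift_apply_of]
      have hcomm : (⟨Y W a 1, Multiplicative.ofAdd 1⟩ :
            SemidirectProduct (PresentedGroup (cycleRels G)) (Multiplicative ℤ) (theta W))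
          * ⟨Y W b 1, Multiplicative.ofAdd 1⟩
          = (⟨Y W b 1, Multiplicative.ofAdd 1⟩ :
            SemidirectProduct (PresentedGroup (cycleRels G)) (Multiplicative ℤ) (theta W))
          * ⟨Y W a 1, Multiplicative.ofAdd 1⟩ := by
        have hd : ∀ (k : ℤ), Y W a k = (PresentedGroup.of (⟨(a, b), hab⟩ : G.Dart)) ^ k
            * Y W b k := fun k => Y_eq W ⟨(a, b), hab⟩ k
        refine SemidirectProduct.ext ?_ rfl
        show Y W a 1 * theta W (Multiplicative.ofAdd 1) (Y W b 1)
          = Y W b 1 * theta W (Multiplicative.ofAdd 1) (Y W a 1)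
        rw [theta_apply, theta_apply]
        show Y W a 1 * sig W 1 (Y W b 1) = Y W b 1 * sig W 1 (Y W a 1)
        rw [sig_Y, sig_Y, hd 1, hd (1 + 1)]
        group
      rw [hcomm]
      group)

lemma Bhom_of (v : V) :
    Bhom W (PresentedGroup.of v)
      = ⟨Y W v 1, Multiplicative.ofAdd 1⟩ :=
  PresentedGroup.toGroup.of _

/-- The homomorphism from the semidirect product to the RAAG. -/
noncomputable def Ahom :
    SemidirectProduct (PresentedGroup (cycleRels G)) (Multiplicative ℤ) (theta W)
      →* Raag G :=
  SemidirectProduct.lift alpha (zpowersHom (Raag G) (PresentedGroup.of v₀)) (by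
    intro g
    ext e
    simp only [MonoidHom.comp_apply, MulEquiv.coe_toMonoidHom, MulAut.conj_apply,
      zpowersHom_apply]
    rw [theta_apply, sig_of, map_mul, map_mul, map_inv, alpha_Y, alpha_of]
    set k := g.toAdd
    set X := alphaf e with hX
    have hc : Commute ((PresentedGroup.of e.toProd.1 : Raag G) ^ k) X := by
      refine Commute.zpow_left ?_ k
      rw [hX, alphaf]
      exact Commute.mul_right (Commute.refl _) (raag_comm e.adj).inv_right
    have key : ((PresentedGroup.of e.toProd.1 : Raag G) ^ k)⁻¹ * X
        * (PresentedGroup.of e.toProd.1 : Raag G) ^ k = X := by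
      rw [hc.inv_left.eq, mul_assoc, inv_mul_cancel, mul_one]
    calc ((PresentedGroup.of e.toProd.1 : Raag G) ^ k
            * ((PresentedGroup.of v₀ : Raag G) ^ k)⁻¹)⁻¹ * X
            * ((PresentedGroup.of e.toProd.1 : Raag G) ^ k
              * ((PresentedGroup.of v₀ : Raag G) ^ k)⁻¹)
        = (PresentedGroup.of v₀ : Raag G) ^ k
            * (((PresentedGroup.of e.toProd.1 : Raag G) ^ k)⁻¹ * X
              * (PresentedGroup.of e.toProd.1 : Raag G) ^ k)
            * ((PresentedGroup.of v₀ : Raag G) ^ k)⁻¹ := by group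
      _ = (PresentedGroup.of v₀ : Raag G) ^ k * X
            * ((PresentedGroup.of v₀ : Raag G) ^ k)⁻¹ := by rw [key]
      _ = (PresentedGroup.of v₀ : Raag G) ^ k * alpha (PresentedGroup.of e)
            * ((PresentedGroup.of v₀ : Raag G) ^ k)⁻¹ := by rw [alpha_of])

lemma Ahom_Bhom : (Ahom W).comp (Bhom W) = MonoidHom.id (Raag G) := by
  ext v
  simp only [MonoidHom.comp_apply, MonoidHom.id_apply, Bhom_of]
  rw [SemidirectProduct.mk_eq_inl_mul_inr, map_mul, Ahom, SemidirectProduct.lift_inl,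
    SemidirectProduct.lift_inr, alpha_Y, zpowersHom_apply]
  simp

lemma Bhom_Ahom : (Bhom W).comp (Ahom W) = MonoidHom.id _ := by
  apply SemidirectProduct.hom_ext
  · refine PresentedGroup.ext fun e => ?_
    simp only [MonoidHom.comp_apply, MonoidHom.id_apply]
    rw [Ahom, SemidirectProduct.lift_inl, alpha_of, alphaf, map_mul, map_inv,
      Bhom_of, Bhom_of]
    have hd : Y W e.toProd.1 1 = (PresentedGroup.of e : PresentedGroup (cycleRels G)) ^ (1 : ℤ)
        * Y W e.toProd.2 1 := Y_eq W e 1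
    refine SemidirectProduct.ext ?_ ?_
    · simp only [SemidirectProduct.mul_left, SemidirectProduct.inv_left,
        SemidirectProduct.left_inl, SemidirectProduct.mul_right, SemidirectProduct.inv_right]
      rw [← MulAut.mul_apply, ← map_mul]
      simp only [mul_inv_cancel, map_one, MulAut.one_apply]
      rw [hd]
      group
    · simp
  · apply MonoidHom.ext_mint
    simp only [MonoidHom.comp_apply, MonoidHom.id_apply]
    rw [Ahom, SemidirectProduct.lift_inr, zpowersHom_apply]
    simp only [toAdd_ofAdd, zpow_one]
    rw [Bhom_of]
    refine SemidirectProduct.ext ?_ rfl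
    simp [Y_base]

lemma Ahom_inl (p : PresentedGroup (cycleRels G)) :
    Ahom W (SemidirectProduct.inl p) = alpha p := by
  rw [Ahom, SemidirectProduct.lift_inl]

lemma Ahom_inr (g : Multiplicative ℤ) :
    Ahom W (SemidirectProduct.inr g) = (PresentedGroup.of v₀ : Raag G) ^ g.toAdd := by
  rw [Ahom, SemidirectProduct.lift_inr, zpowersHom_apply]

end Base2

end KernelPresAux

/-- For a connected finite flag complex `Δ`, the kernel `H_Δ` of the map `G_Δ → ℤ` sending
all generators to `1` is presented by the directed edges of `Δ` with relators `e₁ⁿ⋯e_lⁿ`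
over directed cycles `(e₁,…,e_l)` (`l ≥ 2`) and nonzero integers `n`; the isomorphism sends
the generator `e` to `ιe·(τe)⁻¹`. -/
theorem kernel_presentation {V : Type*} [Fintype V] (G : SimpleGraph V) (hconn : G.Connected)
    (φ : Raag G →* Multiplicative ℤ)
    (hφ : ∀ v : V, φ (PresentedGroup.of v) = Multiplicative.ofAdd 1) :
    ∃ iso : PresentedGroup (cycleRels G) ≃* φ.ker,
      ∀ e : G.Dart, (iso (PresentedGroup.of e) : Raag G) =
        PresentedGroup.of e.toProd.1 * (PresentedGroup.of e.toProd.2)⁻¹ := by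
  classical
  obtain ⟨v₀⟩ := hconn.nonempty
  set W : ∀ v : V, G.Walk v v₀ := fun v => (hconn.preconnected v v₀).some with hWdef
  have hphi : ∀ p : PresentedGroup (cycleRels G), φ (KernelPresAux.alpha p) = 1 := by
    have h1 : φ.comp KernelPresAux.alpha = 1 := by
      refine PresentedGroup.ext fun e => ?_
      simp only [MonoidHom.comp_apply, KernelPresAux.alpha_of, KernelPresAux.alphaf,
        MonoidHom.one_apply, map_mul, map_inv, hφ]
      simp
    exact fun p => DFunLike.congr_fun h1 p
  have hker : ∀ p, KernelPresAux.alpha p ∈ φ.ker := fun p => MonoidHom.mem_ker.mpr (hphi p)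
  set j : PresentedGroup (cycleRels G) →* φ.ker :=
    (KernelPresAux.alpha (G := G)).codRestrict φ.ker hker with hjdef
  have hBA := KernelPresAux.Bhom_Ahom W
  have hAB := KernelPresAux.Ahom_Bhom W
  have hBalpha : ∀ p, KernelPresAux.Bhom W (KernelPresAux.alpha p)
      = SemidirectProduct.inl p := by
    intro p
    rw [← KernelPresAux.Ahom_inl W p]
    exact DFunLike.congr_fun hBA (SemidirectProduct.inl p)
  have hinj : Function.Injective j := by
    intro p q h
    have h' : KernelPresAux.alpha p = KernelPresAux.alpha q := congrArg Subtype.val h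
    have h2 : (SemidirectProduct.inl p :
        SemidirectProduct (PresentedGroup (cycleRels G)) (Multiplicative ℤ)
          (KernelPresAux.theta W)) = SemidirectProduct.inl q := by
      rw [← hBalpha p, h', hBalpha q]
    exact SemidirectProduct.inl_injective h2
  have hsurj : Function.Surjective j := by
    rintro ⟨g, hg⟩
    set s := KernelPresAux.Bhom W g with hs
    have hAs : KernelPresAux.Ahom W s = g := DFunLike.congr_fun hAB g
    have hsplit := SemidirectProduct.inl_left_mul_inr_right s
    have hφg : φ g = 1 := hg
    have hφAs : φ (KernelPresAux.Ahom W s)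
        = Multiplicative.ofAdd (Multiplicative.toAdd s.right) := by
      rw [← hsplit, map_mul, map_mul, KernelPresAux.Ahom_inl, KernelPresAux.Ahom_inr,
        hphi, one_mul, map_zpow, hφ, ← ofAdd_zsmul, smul_eq_mul, mul_one]
      simp
    have hright : s.right = 1 := by
      rw [hAs, hφg] at hφAs
      have h3 := hφAs.symm
      simpa using h3
    refine ⟨s.left, ?_⟩
    apply Subtype.ext
    show KernelPresAux.alpha s.left = g
    have h4 : (SemidirectProduct.inl s.left :
        SemidirectProduct (PresentedGroup (cycleRels G)) (Multiplicative ℤ)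
          (KernelPresAux.theta W)) = s := by
      rw [← hsplit, hright, map_one, mul_one]
      simp
    rw [← KernelPresAux.Ahom_inl W s.left, h4, hAs]
  refine ⟨MulEquiv.ofBijective j ⟨hinj, hsurj⟩, fun e => ?_⟩
  show ((j (PresentedGroup.of e) : φ.ker) : Raag G) = _
  simp [hjdef, KernelPresAux.alpha_of, KernelPresAux.alphaf]
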